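/- (Example: one-dimensional TV regularization, interior case) Let p ≥ 2 and consider the 1D total-variation regularizer ‖Ψᵀ x‖₁ = Σ_{j=1}^{p−1} |x_j − x_{j+1}|, where Ψ = D(p)ᵀ and D(p) is the p × p matrix whose rows 1,…,p−1 are e_j − e_{j+1} and whose last row is zero. Suppose the constant vector x⋄ = x₀·𝟏 belongs to X⋄ ∩ int C for some x₀ ∈ ℝ. Then U = max_{1 ≤ j ≤ p−1} | Σ_{i=1}^{j} [∇L(x₀·𝟏)]_i |, the largest absolute partial sum of the gradient coordinates at x₀·𝟏. -/

import Mathlib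

open Matrix
open scoped RealInnerProductSpace ENNReal

noncomputable section

def rnorm1 {n : ℕ} (z : Fin n → ℝ) : ℝ := ∑ j, |z j|

noncomputable def rnormInf {n : ℕ} (z : Fin n → ℝ) : ℝ := ⨆ j, |z j|

/-- `Ψᵀ x` for a real dictionary `Ψ`. -/
def psiT {p q : ℕ} (Ψ : Matrix (Fin p) (Fin q) ℝ) (x : EuclideanSpace ℝ (Fin p)) :
    Fin q → ℝ :=
  Matrix.mulVec Ψᵀ fun i => x i

def XuSetR {p q : ℕ} (C : Set (EuclideanSpace ℝ (Fin p))) (L : EuclideanSpace ℝ (Fin p) → ℝ)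
    (Ψ : Matrix (Fin p) (Fin q) ℝ) (u : ℝ) : Set (EuclideanSpace ℝ (Fin p)) :=
  {x ∈ C | ∀ χ ∈ C, L x + u * rnorm1 (psiT Ψ x) ≤ L χ + u * rnorm1 (psiT Ψ χ)}

def QSetR {p q : ℕ} (C : Set (EuclideanSpace ℝ (Fin p))) (Ψ : Matrix (Fin p) (Fin q) ℝ) :
    Set (EuclideanSpace ℝ (Fin p)) :=
  {x ∈ C | ∀ χ ∈ C, rnorm1 (psiT Ψ x) ≤ rnorm1 (psiT Ψ χ)}

def XdSetR {p q : ℕ} (C : Set (EuclideanSpace ℝ (Fin p))) (L : EuclideanSpace ℝ (Fin p) → ℝ)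
    (Ψ : Matrix (Fin p) (Fin q) ℝ) : Set (EuclideanSpace ℝ (Fin p)) :=
  {x ∈ QSetR C Ψ | ∀ χ ∈ QSetR C Ψ, L x ≤ L χ}

def UboundR {p q : ℕ} (C : Set (EuclideanSpace ℝ (Fin p))) (L : EuclideanSpace ℝ (Fin p) → ℝ)
    (Ψ : Matrix (Fin p) (Fin q) ℝ) : ℝ≥0∞ :=
  sInf (ENNReal.ofReal '' {u : ℝ | 0 ≤ u ∧ (XuSetR C L Ψ u ∩ QSetR C Ψ).Nonempty})

/-- The `L × L` finite-difference matrix `D(L)`: rows `0,…,L−2` are `e_j − e_{j+1}`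
and the last row is zero. -/
def Dmat (L : ℕ) : Matrix (Fin L) (Fin L) ℝ := fun i j =>
  if (i : ℕ) + 1 < L then
    (if j = i then 1 else if (j : ℕ) = (i : ℕ) + 1 then -1 else 0)
  else 0

/- ############ auxiliary lemmas ############ -/

open Filter Set

lemma deriv_ge_of_right (φ : ℝ → ℝ) (m c : ℝ) (h : HasDerivAt φ m 0)
    (hb : ∀ᶠ t in nhdsWithin (0:ℝ) (Set.Ioi 0), φ 0 - c * t ≤ φ t) : -c ≤ m := by
  have hs : Tendsto (slope φ 0) (nhdsWithin (0:ℝ) (Set.Ioi 0)) (nhds m) :=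
    (hasDerivAt_iff_tendsto_slope.mp h).mono_left
      (nhdsWithin_mono _ (fun x hx => ne_of_gt hx))
  refine ge_of_tendsto hs ?_
  filter_upwards [hb, self_mem_nhdsWithin] with t ht ht0
  have hsl : slope φ 0 t = (φ t - φ 0) / t := by simp [slope_def_field]
  rw [hsl, le_div_iff₀ ht0]
  linarith

lemma convex_grad_ineq (φ : ℝ → ℝ) (m : ℝ) (hφ : ConvexOn ℝ Set.univ φ)
    (h : HasDerivAt φ m 0) : φ 0 + m ≤ φ 1 := by
  have hs : Tendsto (slope φ 0) (nhdsWithin (0:ℝ) (Set.Ioi 0)) (nhds m) :=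
    (hasDerivAt_iff_tendsto_slope.mp h).mono_left
      (nhdsWithin_mono _ (fun x hx => ne_of_gt hx))
  have key : m ≤ φ 1 - φ 0 := by
    refine le_of_tendsto hs ?_
    filter_upwards [Ioo_mem_nhdsGT_of_mem (Set.left_mem_Ico.2 one_pos)] with t ht
    have h3 := hφ.2 (Set.mem_univ (0:ℝ)) (Set.mem_univ (1:ℝ))
      (by linarith [ht.1, ht.2] : (0:ℝ) ≤ 1 - t) (le_of_lt ht.1) (by ring)
    simp only [smul_eq_mul, mul_zero, mul_one, zero_add] at h3
    have hsl : slope φ 0 t = (φ t - φ 0) / t := by simp [slope_def_field]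
    rw [hsl, div_le_iff₀ ht.1]
    have he : (1 - t) * φ 0 + t * φ 1 = φ 0 + t * (φ 1 - φ 0) := by ring
    rw [he] at h3
    linarith
  linarith

lemma hasDerivAt_line {p : ℕ} (L : EuclideanSpace ℝ (Fin p) → ℝ)
    (g x d : EuclideanSpace ℝ (Fin p))
    (h : HasGradientAt L g x) :
    HasDerivAt (fun t : ℝ => L (x + t • d)) ⟪g, d⟫ 0 := by
  have h1 : HasDerivAt (fun t : ℝ => x + t • d) d 0 := by
    simpa using ((hasDerivAt_id (0:ℝ)).smul_const d).const_add x
  have h2 : x + (0:ℝ) • d = x := by simp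
  have h3 := (h2.symm ▸ h.hasFDerivAt :
      HasFDerivAt L ((InnerProductSpace.toDual ℝ (EuclideanSpace ℝ (Fin p))) g)
        (x + (0:ℝ) • d)).comp_hasDerivAt 0 h1
  simpa [h2, InnerProductSpace.toDual_apply_apply, Function.comp_def] using h3

lemma psiT_Dmat_apply {p : ℕ} (x : EuclideanSpace ℝ (Fin p)) (i : Fin p) :
    psiT (Dmat p)ᵀ x i = if h : (i:ℕ)+1 < p then x i - x ⟨(i:ℕ)+1, h⟩ else 0 := by
  simp only [psiT, Matrix.transpose_transpose, Matrix.mulVec, dotProduct, Dmat]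
  by_cases h : (i:ℕ)+1 < p
  · rw [dif_pos h]
    have key : ∀ j : Fin p,
        (if (i:ℕ)+1 < p then (if j = i then (1:ℝ) else if (j:ℕ)=(i:ℕ)+1 then -1 else 0) else 0) * x j
        = (if j = i then x j else 0) - (if j = (⟨(i:ℕ)+1,h⟩ : Fin p) then x j else 0) := by
      intro j
      rw [if_pos h]
      rcases eq_or_ne j i with rfl | hji
      · have hne : ¬ (j = (⟨(j:ℕ)+1,h⟩ : Fin p)) := by simp [Fin.ext_iff]
        simp [hne]
      · rw [if_neg hji]
        by_cases h2 : (j:ℕ) = (i:ℕ)+1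
        · have hj : j = (⟨(i:ℕ)+1,h⟩ : Fin p) := by simp [Fin.ext_iff, h2]
          rw [if_pos h2, if_neg hji, if_pos hj]; ring
        · have hne : ¬ (j = (⟨(i:ℕ)+1,h⟩ : Fin p)) := by simp [Fin.ext_iff, h2]
          simp [h2, hne, hji]
    rw [Finset.sum_congr rfl (fun j _ => key j), Finset.sum_sub_distrib,
      Finset.sum_ite_eq' Finset.univ i, Finset.sum_ite_eq' Finset.univ]
    simp
  · rw [dif_neg h]
    simp [if_neg h]

lemma abel_key (n : ℕ) (a c : ℕ → ℝ) (hsum : ∑ i ∈ Finset.range n, a i = 0) :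
    ∑ i ∈ Finset.range n, a i * c i =
      ∑ i ∈ Finset.range (n-1), (c i - c (i+1)) * ∑ j ∈ Finset.range (i+1), a j := by
  have h := Finset.sum_range_by_parts c a n
  simp only [smul_eq_mul, hsum, mul_zero, zero_sub] at h
  have h2 : ∑ i ∈ Finset.range n, a i * c i = ∑ i ∈ Finset.range n, c i * a i := by
    apply Finset.sum_congr rfl; intro i _; ring
  rw [h2, h, ← Finset.sum_neg_distrib]
  apply Finset.sum_congr rfl; intro i _; ring

lemma abel_lb (n : ℕ) (a c : ℕ → ℝ) (M : ℝ) (hsum : ∑ i ∈ Finset.range n, a i = 0)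
    (hM : ∀ i, i < n - 1 → |∑ j ∈ Finset.range (i+1), a j| ≤ M) :
    -(M * ∑ i ∈ Finset.range (n-1), |c i - c (i+1)|) ≤ ∑ i ∈ Finset.range n, a i * c i := by
  rw [abel_key n a c hsum, Finset.mul_sum, ← Finset.sum_neg_distrib]
  apply Finset.sum_le_sum
  intro i hi
  have h1 := hM i (Finset.mem_range.mp hi)
  have h2 : |(c i - c (i+1)) * ∑ j ∈ Finset.range (i+1), a j| ≤ |c i - c (i+1)| * M := by
    rw [abs_mul]; exact mul_le_mul_of_nonneg_left h1 (abs_nonneg _)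
  have h3 := neg_abs_le ((c i - c (i+1)) * ∑ j ∈ Finset.range (i+1), a j)
  have h4 : M * |c i - c (i+1)| = |c i - c (i+1)| * M := mul_comm _ _
  linarith

lemma rnorm1_nonneg {n : ℕ} (z : Fin n → ℝ) : 0 ≤ rnorm1 z :=
  Finset.sum_nonneg fun _ _ => abs_nonneg _

lemma rnorm1_psiT_const {p : ℕ} (c : ℝ) :
    rnorm1 (psiT (Dmat p)ᵀ (WithLp.toLp 2 (fun _ => c : Fin p → ℝ) : EuclideanSpace ℝ (Fin p))) = 0 := by
  unfold rnorm1
  have h : ∀ i : Fin p,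
      |psiT (Dmat p)ᵀ (WithLp.toLp 2 (fun _ => c : Fin p → ℝ) : EuclideanSpace ℝ (Fin p)) i| = 0 := by
    intro i
    rw [psiT_Dmat_apply]
    by_cases h : (i:ℕ)+1 < p
    · rw [dif_pos h]; simp
    · rw [dif_neg h]; simp
  rw [Finset.sum_congr rfl (fun i _ => h i)]
  simp

lemma rnorm1_psiT_eq {p : ℕ} (hp : 1 ≤ p) (x : EuclideanSpace ℝ (Fin p)) (xa : ℕ → ℝ)
    (hxa : ∀ (k : ℕ) (h : k < p), xa k = x ⟨k, h⟩) :
    rnorm1 (psiT (Dmat p)ᵀ x) = ∑ i ∈ Finset.range (p-1), |xa i - xa (i+1)| := by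
  unfold rnorm1
  have h1 : ∀ i : Fin p, |psiT (Dmat p)ᵀ x i|
      = (fun k => if k + 1 < p then |xa k - xa (k+1)| else 0) (i : ℕ) := by
    intro i
    rw [psiT_Dmat_apply]
    by_cases h : (i:ℕ)+1 < p
    · rw [dif_pos h]
      simp only [if_pos h]
      rw [hxa (↑i) i.isLt, hxa (↑i+1) h]
    · rw [dif_neg h]
      simp [h]
  rw [Finset.sum_congr rfl (fun i _ => h1 i),
    Fin.sum_univ_eq_sum_range (fun k => if k + 1 < p then |xa k - xa (k+1)| else 0) p]
  have key : ∀ m : ℕ, ∑ k ∈ Finset.range (m+1),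
      (if k+1 < m+1 then |xa k - xa (k+1)| else 0) = ∑ k ∈ Finset.range m, |xa k - xa (k+1)| := by
    intro m
    rw [Finset.sum_range_succ, if_neg (by omega), add_zero]
    apply Finset.sum_congr rfl
    intro k hk
    have := Finset.mem_range.mp hk
    rw [if_pos (by omega)]
  have h2 : p = (p-1)+1 := (Nat.succ_pred_eq_of_pos hp).symm
  conv_lhs => rw [h2]
  exact key (p-1)

theorem statement_16 {p : ℕ} (hp : 2 ≤ p)
    (C : Set (EuclideanSpace ℝ (Fin p))) (hCne : C.Nonempty) (hCcl : IsClosed C)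
    (hCcv : Convex ℝ C)
    (L : EuclideanSpace ℝ (Fin p) → ℝ) (hLcv : ConvexOn ℝ Set.univ L)
    (gradL : EuclideanSpace ℝ (Fin p) → EuclideanSpace ℝ (Fin p))
    (hLd : ∀ x, HasGradientAt L (gradL x) x)
    (hLb : BddBelow (L '' C))
    (x₀ : ℝ)
    (hx : (WithLp.toLp 2 (fun _ => x₀ : Fin p → ℝ) : EuclideanSpace ℝ (Fin p)) ∈
      XdSetR C L ((Dmat p)ᵀ) ∩ interior C) :
    UboundR C L ((Dmat p)ᵀ) =
      ENNReal.ofReal (⨆ j : Fin (p - 1),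
        |∑ i : Fin p, if (i : ℕ) ≤ (j : ℕ) then gradL (WithLp.toLp 2 (fun _ => x₀)) i else 0|) := by
  set xs : EuclideanSpace ℝ (Fin p) := (WithLp.toLp 2 (fun _ => x₀ : Fin p → ℝ) : EuclideanSpace ℝ (Fin p)) with hxs
  set g : EuclideanSpace ℝ (Fin p) := gradL xs with hg
  set w : Fin (p-1) → ℝ := fun j => ∑ i : Fin p, if (i : ℕ) ≤ (j : ℕ) then g i else 0 with hwdef
  have hgoal : (⨆ j : Fin (p - 1), |∑ i : Fin p, if (i : ℕ) ≤ (j : ℕ) then g i else 0|)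
      = ⨆ j, |w j| := rfl
  set M : ℝ := ⨆ j, |w j| with hMw
  obtain ⟨hxXd, hxint⟩ := hx
  obtain ⟨hxsQ, hxsmin⟩ := hxXd
  have hxsC : xs ∈ C := hxsQ.1
  have hbdd : BddAbove (Set.range fun j => |w j|) := Set.Finite.bddAbove (Set.finite_range _)
  have hwM : ∀ j, |w j| ≤ M := fun j => le_ciSup hbdd j
  have hp1 : 0 < p - 1 := by omega
  have hM0 : 0 ≤ M := le_trans (abs_nonneg _) (hwM ⟨0, hp1⟩)
  set a : ℕ → ℝ := fun k => if h : k < p then g ⟨k, h⟩ else 0 with ha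
  have haFin : ∀ i : Fin p, a (i : ℕ) = g i := by
    intro i; rw [ha]; simp [i.isLt]
  have hinner : ∀ d : EuclideanSpace ℝ (Fin p), ⟪g, d⟫ = ∑ i, g i * d i := by
    intro d; simp [PiLp.inner_apply, RCLike.inner_apply, mul_comm]
  have hTVconst : ∀ c : ℝ,
      rnorm1 (psiT (Dmat p)ᵀ (WithLp.toLp 2 (fun _ => c : Fin p → ℝ) : EuclideanSpace ℝ (Fin p))) = 0 :=
    fun c => rnorm1_psiT_const c
  have hQconst : ∀ c : ℝ, (WithLp.toLp 2 (fun _ => c : Fin p → ℝ) : EuclideanSpace ℝ (Fin p)) ∈ C →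
      (WithLp.toLp 2 (fun _ => c : Fin p → ℝ) : EuclideanSpace ℝ (Fin p)) ∈ QSetR C (Dmat p)ᵀ := by
    intro c hc
    exact ⟨hc, fun χ hχ => by rw [hTVconst c]; exact rnorm1_nonneg _⟩
  have hTVxs : rnorm1 (psiT (Dmat p)ᵀ xs) = 0 := hTVconst x₀
  have hline : ∀ d : EuclideanSpace ℝ (Fin p),
      HasDerivAt (fun t : ℝ => L (xs + t • d)) ⟪g, d⟫ 0 :=
    fun d => hasDerivAt_line L g xs d (by rw [hg]; exact hLd xs)
  have hev : ∀ d : EuclideanSpace ℝ (Fin p), ∀ᶠ t in nhds (0:ℝ), xs + t • d ∈ C := by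
    intro d
    have hc : Continuous (fun t : ℝ => xs + t • d) := by continuity
    have h0 : (fun t : ℝ => xs + t • d) 0 ∈ interior C := by simpa using hxint
    have h1 := hc.continuousAt.eventually_mem (isOpen_interior.mem_nhds h0)
    exact h1.mono fun t ht => interior_subset ht
  have hsum0 : ∑ i : Fin p, g i = 0 := by
    have key : ∀ σ : ℝ, 0 ≤ ∑ i : Fin p, g i * σ := by
      intro σ
      set d : EuclideanSpace ℝ (Fin p) := (WithLp.toLp 2 (fun _ => σ : Fin p → ℝ) : EuclideanSpace ℝ (Fin p)) with hd
      have hconst : ∀ t : ℝ,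
          xs + t • d = (WithLp.toLp 2 (fun _ => x₀ + t * σ : Fin p → ℝ) : EuclideanSpace ℝ (Fin p)) := by
        intro t; ext i; simp [hxs, hd]
      have hb : ∀ᶠ t in nhdsWithin (0:ℝ) (Set.Ioi 0),
          (fun t : ℝ => L (xs + t • d)) 0 - 0 * t ≤ (fun t : ℝ => L (xs + t • d)) t := by
        filter_upwards [(hev d).filter_mono nhdsWithin_le_nhds] with t ht
        have hQ : xs + t • d ∈ QSetR C (Dmat p)ᵀ := by
          rw [hconst t]; exact hQconst _ (by rw [← hconst t]; exact ht)
        have h1 : L xs ≤ L (xs + t • d) := hxsmin _ hQ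
        show L (xs + (0:ℝ) • d) - 0 * t ≤ L (xs + t • d)
        have e0 : xs + (0:ℝ) • d = xs := by simp
        rw [e0]
        linarith
      have hkey := deriv_ge_of_right _ _ 0 (hline d) hb
      rw [hinner d] at hkey
      have hds : ∀ i : Fin p, d i = σ := fun i => rfl
      simp only [hds] at hkey
      simpa using hkey
    have h1 := key 1
    have h2 := key (-1)
    simp only [mul_one] at h1
    have h2' : ∑ i : Fin p, g i * (-1) = -∑ i : Fin p, g i := by
      rw [← Finset.sum_neg_distrib]; apply Finset.sum_congr rfl; intros; ring
    rw [h2'] at h2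
    linarith
  have hsum0' : ∑ i ∈ Finset.range p, a i = 0 := by
    rw [← Fin.sum_univ_eq_sum_range a p, Finset.sum_congr rfl fun i _ => haFin i]
    exact hsum0
  have hWw : ∀ j : Fin (p-1), ∑ i ∈ Finset.range ((j:ℕ)+1), a i = w j := by
    intro j
    have hjp : (j:ℕ)+1 ≤ p := by have := j.isLt; omega
    have e1 : w j = ∑ i ∈ Finset.range p, (if i ≤ (j:ℕ) then a i else 0) := by
      rw [hwdef]
      rw [← Fin.sum_univ_eq_sum_range (fun k => if k ≤ (j:ℕ) then a k else 0) p]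
      apply Finset.sum_congr rfl
      intro i _
      simp only [haFin i]
    have e2 : ∑ i ∈ Finset.range p, (if i ≤ (j:ℕ) then a i else 0)
        = ∑ i ∈ Finset.range ((j:ℕ)+1), (if i ≤ (j:ℕ) then a i else 0) :=
      (Finset.sum_subset (Finset.range_subset_range.mpr hjp)
        (fun x hx hnx => if_neg (by simp only [Finset.mem_range] at hx hnx; omega))).symm
    rw [e1, e2]
    apply Finset.sum_congr rfl
    intro i hi
    have hi' : i ≤ (j:ℕ) := by simp only [Finset.mem_range] at hi; omega
    rw [if_pos hi']
  have hGradLB : ∀ χ : EuclideanSpace ℝ (Fin p),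
      -(M * rnorm1 (psiT (Dmat p)ᵀ χ)) ≤ ∑ i : Fin p, g i * χ i := by
    intro χ
    set xa : ℕ → ℝ := fun k => if h : k < p then χ ⟨k, h⟩ else 0 with hxa
    have hTV : rnorm1 (psiT (Dmat p)ᵀ χ) = ∑ i ∈ Finset.range (p-1), |xa i - xa (i+1)| :=
      rnorm1_psiT_eq (by omega) χ xa (fun k h => by simp [hxa, h])
    have hsumeq : ∑ i : Fin p, g i * χ i = ∑ i ∈ Finset.range p, a i * xa i := by
      rw [← Fin.sum_univ_eq_sum_range (fun k => a k * xa k) p]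
      apply Finset.sum_congr rfl
      intro i _
      rw [haFin i]
      congr 1
      simp [hxa, i.isLt]
    rw [hTV, hsumeq]
    apply abel_lb p a xa M hsum0'
    intro i hi
    have h5 : ∑ k ∈ Finset.range (i+1), a k = w ⟨i, hi⟩ := by simpa using hWw ⟨i, hi⟩
    rw [h5]
    exact hwM _
  have hMXu : xs ∈ XuSetR C L (Dmat p)ᵀ M := by
    refine ⟨hxsC, fun χ hχ => ?_⟩
    set v : EuclideanSpace ℝ (Fin p) := χ - xs with hv
    have hφcv : ConvexOn ℝ Set.univ (fun t : ℝ => L (xs + t • v)) := by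
      refine ⟨convex_univ, fun t _ s _ b1 b2 hb1 hb2 hb12 => ?_⟩
      show L (xs + (b1 • t + b2 • s) • v) ≤ b1 • L (xs + t • v) + b2 • L (xs + s • v)
      have he : xs + (b1 • t + b2 • s) • v = b1 • (xs + t • v) + b2 • (xs + s • v) := by
        simp only [smul_eq_mul]
        rw [show xs + (b1 * t + b2 * s) • v = (b1 + b2) • xs + (b1 * t + b2 * s) • v by
          rw [hb12, one_smul]]
        module
      rw [he]
      exact hLcv.2 (Set.mem_univ _) (Set.mem_univ _) hb1 hb2 hb12
    have hd := convex_grad_ineq _ _ hφcv (hline v)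
    have e0 : xs + (0:ℝ) • v = xs := by simp
    have e1 : xs + (1:ℝ) • v = χ := by simp [hv]
    simp only [e0, e1] at hd
    have hip : ⟪g, v⟫ = (∑ i : Fin p, g i * χ i) - x₀ * ∑ i : Fin p, g i := by
      rw [hinner v, Finset.mul_sum, ← Finset.sum_sub_distrib]
      apply Finset.sum_congr rfl
      intro i _
      have hvi : v i = χ i - x₀ := by simp [hv, hxs]
      rw [hvi]; ring
    rw [hip, hsum0, mul_zero, sub_zero] at hd
    have hlb := hGradLB χ
    rw [hTVxs, mul_zero, add_zero]
    linarith
  have hub : ∀ u : ℝ, 0 ≤ u → (XuSetR C L (Dmat p)ᵀ u ∩ QSetR C (Dmat p)ᵀ).Nonempty → M ≤ u := by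
    rintro u hu ⟨x, hxXu, hxQ2⟩
    have hTVx : rnorm1 (psiT (Dmat p)ᵀ x) = 0 :=
      le_antisymm (le_of_le_of_eq (hxQ2.2 xs hxsC) hTVxs) (rnorm1_nonneg _)
    have hLx : L xs ≤ L x := hxsmin x hxQ2
    have hxsXu : ∀ χ ∈ C, L xs ≤ L χ + u * rnorm1 (psiT (Dmat p)ᵀ χ) := by
      intro χ hχ
      have h6 := hxXu.2 χ hχ
      rw [hTVx, mul_zero, add_zero] at h6
      linarith
    rw [hMw]
    haveI : Nonempty (Fin (p-1)) := ⟨⟨0, hp1⟩⟩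
    apply ciSup_le
    intro j
    have hjlt : (j:ℕ) < p - 1 := j.isLt
    set jp : Fin p := ⟨(j:ℕ), by omega⟩ with hjpdef
    have key : ∀ σ : ℝ, σ = 1 ∨ σ = -1 → -u ≤ σ * w j := by
      intro σ hσ
      set d : EuclideanSpace ℝ (Fin p) :=
        (WithLp.toLp 2 (fun i => σ * (if (i:ℕ) ≤ (j:ℕ) then 1 else 0) : Fin p → ℝ) :
          EuclideanSpace ℝ (Fin p)) with hd
      have hTVd : ∀ t : ℝ, 0 < t → rnorm1 (psiT (Dmat p)ᵀ (xs + t • d)) = t := by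
        intro t ht
        have hentry : ∀ i : Fin p, psiT (Dmat p)ᵀ (xs + t • d) i = if i = jp then t * σ else 0 := by
          intro i
          rw [psiT_Dmat_apply]
          by_cases h : (i:ℕ)+1 < p
          · rw [dif_pos h]
            have hv1 : (xs + t • d) i = x₀ + t * (σ * (if (i:ℕ) ≤ (j:ℕ) then 1 else 0)) := by
              simp [hxs, hd]
            have hv2 : (xs + t • d) ⟨(i:ℕ)+1, h⟩
                = x₀ + t * (σ * (if (i:ℕ)+1 ≤ (j:ℕ) then 1 else 0)) := by
              simp [hxs, hd]
            rw [hv1, hv2]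
            by_cases hij : i = jp
            · have hijn : (i:ℕ) = (j:ℕ) := by rw [hij]
              rw [if_pos hij, if_pos (by omega), if_neg (by omega)]
              ring
            · have hne : (i:ℕ) ≠ (j:ℕ) := fun hc => hij (Fin.ext (by simpa [hjpdef] using hc))
              rw [if_neg hij]
              by_cases hle : (i:ℕ) ≤ (j:ℕ)
              · rw [if_pos hle, if_pos (by omega)]; ring
              · rw [if_neg hle, if_neg (by omega)]; ring
          · rw [dif_neg h]
            have hin : (i:ℕ) + 1 ≥ p := by omega
            have hne : ¬ (i = jp) := by
              intro hc
              have : (i:ℕ) = (j:ℕ) := by rw [hc]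
              omega
            rw [if_neg hne]
        unfold rnorm1
        rw [Finset.sum_congr rfl (fun i _ => by rw [hentry i])]
        rw [show (∑ i : Fin p, |if i = jp then t * σ else 0|)
            = ∑ i : Fin p, (if i = jp then |t * σ| else 0) from
          Finset.sum_congr rfl (fun i _ => by split_ifs <;> simp)]
        rw [Finset.sum_ite_eq' Finset.univ jp]
        simp only [Finset.mem_univ, if_true]
        rw [abs_mul]
        rcases hσ with rfl | rfl <;> simp [abs_of_pos ht]
      have hb : ∀ᶠ t in nhdsWithin (0:ℝ) (Set.Ioi 0),
          (fun t : ℝ => L (xs + t • d)) 0 - u * t ≤ (fun t : ℝ => L (xs + t • d)) t := by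
        filter_upwards [(hev d).filter_mono nhdsWithin_le_nhds, self_mem_nhdsWithin] with t ht ht0
        have h1 := hxsXu _ ht
        rw [hTVd t ht0] at h1
        show L (xs + (0:ℝ) • d) - u * t ≤ L (xs + t • d)
        have e0 : xs + (0:ℝ) • d = xs := by simp
        rw [e0]
        linarith
      have hd2 := deriv_ge_of_right _ _ u (hline d) hb
      rw [hinner d] at hd2
      have hipd : ∑ i : Fin p, g i * d i = σ * w j := by
        rw [hwdef]
        simp only
        rw [Finset.mul_sum]
        apply Finset.sum_congr rfl
        intro i _
        have hdi : d i = σ * (if (i:ℕ) ≤ (j:ℕ) then 1 else 0) := rfl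
        rw [hdi]
        split_ifs <;> ring
      rw [hipd] at hd2
      exact hd2
    have k1 := key 1 (Or.inl rfl)
    have k2 := key (-1) (Or.inr rfl)
    rw [one_mul] at k1
    rw [neg_one_mul] at k2
    rw [abs_le]
    constructor <;> linarith
  show UboundR C L (Dmat p)ᵀ = ENNReal.ofReal M
  apply le_antisymm
  · exact sInf_le ⟨M, ⟨hM0, ⟨xs, hMXu, hxsQ⟩⟩, rfl⟩
  · apply le_sInf
    rintro y ⟨u, ⟨hu0, hune⟩, rfl⟩
    exact ENNReal.ofReal_le_ofReal (hub u hu0 hune)
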